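/- Let q be an odd prime power and n = q^2 + 1. Then the largest q-cyclotomic coset leader modulo n is n/2 (i.e., (q^2+1)/2), the second largest is (q−1)^2/2, the third largest is (q^2 − 2q − 1)/2, and the fourth largest is (q−3)(q−1)/2. -/
import Mathlib

private lemma mod_helper (n c v : ℕ) (h : v < n) : (c * n + v) % n = v := by
  rw [Nat.add_comm, Nat.add_mul_mod_self_right, Nat.mod_eq_of_lt h]

private lemma negsq (q n b d : ℕ) (hn : n = q ^ 2 + 1) (hbd : b + d = n)
    (h1 : 1 ≤ b) (h2 : 1 ≤ d) : (b * q ^ 2) % n = d := by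
  obtain ⟨c, rfl⟩ : ∃ c, b = c + 1 := ⟨b - 1, by omega⟩
  have key : (c + 1) * q ^ 2 = c * n + d := by
    have e1 : (c + 1) * q ^ 2 + (c + 1) = c * n + n := by rw [hn]; ring
    linarith [e1, hbd]
  rw [key, mod_helper n c d (by omega)]

private lemma cube_mod (q n a r d : ℕ) (hn : n = q ^ 2 + 1) (hr : (a * q) % n = r)
    (h1 : 1 ≤ r) (hrd : r + d = n) : (a * q ^ 3) % n = d := by
  have hn0 : 0 < n := by rw [hn]; exact Nat.succ_pos _
  have hrn : r < n := hr ▸ Nat.mod_lt _ hn0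
  have e : a * q ^ 3 = a * q * q ^ 2 := by ring
  have hme : a * q * q ^ 2 ≡ r * q ^ 2 [MOD n] :=
    Nat.ModEq.mul_right _ (by rw [← hr]; exact (Nat.mod_modEq _ _).symm)
  rw [e]
  calc (a * q * q ^ 2) % n = (r * q ^ 2) % n := hme
    _ = d := negsq q n r d hn (by omega) h1 (by omega)

private lemma mem_lemma (q n a r : ℕ) (hn : n = q ^ 2 + 1)
    (hr : (a * q) % n = r) (h0 : 1 ≤ a) (h1 : a ≤ r) (h2 : a + r ≤ n)
    (h3 : 2 * a ≤ n) : ∀ j : ℕ, a ≤ (a * q ^ j) % n := by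
  have hn0 : 0 < n := by rw [hn]; exact Nat.succ_pos _
  have han : a < n := by omega
  have hrn : r < n := hr ▸ Nat.mod_lt _ hn0
  have hr1 : 1 ≤ r := le_trans h0 h1
  have h4 : q ^ 4 ≡ 1 [MOD n] := by
    have e1 : q ^ 4 + q ^ 2 = q ^ 2 * n := by rw [hn]; ring
    have e2 : 1 + q ^ 2 = n := by rw [hn]; ring
    have h5 : q ^ 4 + q ^ 2 ≡ 1 + q ^ 2 [MOD n] := by
      rw [e1, e2]
      calc q ^ 2 * n ≡ 0 [MOD n] := Nat.modEq_zero_iff_dvd.mpr (dvd_mul_left n _)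
        _ ≡ n [MOD n] := (Nat.modEq_zero_iff_dvd.mpr dvd_rfl).symm
    exact h5.add_right_cancel' _
  have hper : ∀ j, a * q ^ j ≡ a * q ^ (j % 4) [MOD n] := by
    intro j
    conv_lhs => rw [← Nat.div_add_mod j 4, pow_add, pow_mul]
    calc a * ((q ^ 4) ^ (j / 4) * q ^ (j % 4))
        = (q ^ 4) ^ (j / 4) * (a * q ^ (j % 4)) := by ring
      _ ≡ 1 ^ (j / 4) * (a * q ^ (j % 4)) [MOD n] := Nat.ModEq.mul_right _ (h4.pow _)
      _ = a * q ^ (j % 4) := by rw [one_pow, one_mul]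
  intro j
  have hj : (a * q ^ j) % n = (a * q ^ (j % 4)) % n := hper j
  rw [hj]
  have h5 : j % 4 = 0 ∨ j % 4 = 1 ∨ j % 4 = 2 ∨ j % 4 = 3 := by omega
  rcases h5 with h | h | h | h <;> rw [h]
  · rw [pow_zero, mul_one, Nat.mod_eq_of_lt han]
  · rw [pow_one, hr]; exact h1
  · rw [negsq q n a (n - a) hn (by omega) h0 (by omega)]; omega
  · rw [cube_mod q n a r (n - r) hn hr hr1 (by omega)]; omega

private lemma no_leader (q n m a s r w : ℕ) (hq3 : 3 ≤ q) (hn : n = q ^ 2 + 1)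
    (hm : n = 2 * m) (hw : q = 2 * w + 1) (has : a + s = m)
    (hr : (a * q) % n = r) (h1 : a ≤ r) (h2 : a + r ≤ n)
    (hs : (1 ≤ s ∧ s + 1 ≤ q) ∨ (q + 2 ≤ s ∧ s + 2 ≤ 2 * q)) : False := by
  have hn0 : 0 < n := by rw [hn]; exact Nat.succ_pos _
  have hd1 : (n : ℤ) ∣ (a : ℤ) * q - r := by
    apply Int.dvd_self_sub_of_emod_eq
    have : ((a * q) % n : ℕ) = r := hr
    exact_mod_cast this
  have haz : (a : ℤ) + s = m := by exact_mod_cast has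
  have hqz : (q : ℤ) = 2 * w + 1 := by exact_mod_cast hw
  have hmz : (n : ℤ) = 2 * m := by exact_mod_cast hm
  have hnz : (n : ℤ) = (q : ℤ) ^ 2 + 1 := by exact_mod_cast hn
  have h1z : (a : ℤ) ≤ r := by exact_mod_cast h1
  have h2z : (a : ℤ) + r ≤ n := by exact_mod_cast h2
  have hq3z : (3 : ℤ) ≤ q := by exact_mod_cast hq3
  have hdvd : (n : ℤ) ∣ ((s : ℤ) * q + r - m) := by
    have e : (s : ℤ) * q + r - m = (n : ℤ) * w - ((a : ℤ) * q - r) := by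
      linear_combination (q : ℤ) * haz + (m : ℤ) * hqz - (w : ℤ) * hmz
    rw [e]
    exact dvd_sub (dvd_mul_right _ _) hd1
  rcases hs with ⟨hs1, hs2⟩ | ⟨hs1, hs2⟩
  · have hs1z : (1 : ℤ) ≤ s := by exact_mod_cast hs1
    have hs2z : (s : ℤ) + 1 ≤ q := by exact_mod_cast hs2
    have e0 : (s : ℤ) * (q - 1) = s * q - s := by ring
    have hb0 : (1 : ℤ) * ((q : ℤ) - 1) ≤ s * ((q : ℤ) - 1) :=
      mul_le_mul_of_nonneg_right hs1z (by linarith)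
    have hDpos : 0 < (s : ℤ) * q + r - m := by nlinarith
    have hle := Int.le_of_dvd hDpos hdvd
    have hb1 : (s : ℤ) * ((q : ℤ) + 1) ≤ ((q : ℤ) - 1) * ((q : ℤ) + 1) :=
      mul_le_mul_of_nonneg_right (by linarith) (by linarith)
    have e1 : (s : ℤ) * ((q : ℤ) + 1) = s * q + s := by ring
    have e2 : ((q : ℤ) - 1) * ((q : ℤ) + 1) = (q : ℤ) ^ 2 - 1 := by ring
    linarith
  · have hs1z : (q : ℤ) + 2 ≤ s := by exact_mod_cast hs1
    have hs2z : (s : ℤ) + 2 ≤ 2 * q := by exact_mod_cast hs2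
    have hb0 : ((q : ℤ) + 2) * ((q : ℤ) - 1) ≤ s * ((q : ℤ) - 1) :=
      mul_le_mul_of_nonneg_right hs1z (by linarith)
    have e0 : (s : ℤ) * ((q : ℤ) - 1) = s * q - s := by ring
    have e0' : ((q : ℤ) + 2) * ((q : ℤ) - 1) = (q : ℤ) ^ 2 + q - 2 := by ring
    have hq4 : (4 : ℤ) ≤ q := by linarith
    have hDgt : (n : ℤ) < (s : ℤ) * q + r - m := by linarith
    have hd2 : (n : ℤ) ∣ ((s : ℤ) * q + r - m - n) := dvd_sub hdvd dvd_rfl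
    have hle2 := Int.le_of_dvd (by linarith) hd2
    have hb1 : (s : ℤ) * ((q : ℤ) + 1) ≤ (2 * (q : ℤ) - 2) * ((q : ℤ) + 1) :=
      mul_le_mul_of_nonneg_right (by linarith) (by linarith)
    have e1 : (s : ℤ) * ((q : ℤ) + 1) = s * q + s := by ring
    have e2 : (2 * (q : ℤ) - 2) * ((q : ℤ) + 1) = 2 * (q : ℤ) ^ 2 - 2 := by ring
    linarith

/-- For `q` an odd prime power and `n = q² + 1`, the four largest
`q`-cyclotomic coset leaders modulo `n` are `(q²+1)/2`, `(q−1)²/2`,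
`(q²−2q−1)/2` and `(q−3)(q−1)/2`. -/
theorem four_largest_coset_leaders_odd_q (p e : ℕ) (hp : p.Prime)
    (hpodd : Odd p) (he : 1 ≤ e) (q : ℕ) (hq : q = p ^ e)
    (n : ℕ) (hn : n = q ^ 2 + 1) :
    let S : Set ℕ := {a | a < n ∧ ∀ j : ℕ, a ≤ (a * q ^ j) % n}
    let δ₁ := (q ^ 2 + 1) / 2
    let δ₂ := (q - 1) ^ 2 / 2
    let δ₃ := (q ^ 2 - 2 * q - 1) / 2
    let δ₄ := (q - 3) * (q - 1) / 2
    δ₁ ∈ S ∧ (∀ a ∈ S, a ≤ δ₁) ∧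
    δ₂ ∈ S ∧ (∀ a ∈ S, a < δ₁ → a ≤ δ₂) ∧
    δ₃ ∈ S ∧ (∀ a ∈ S, a < δ₂ → a ≤ δ₃) ∧
    δ₄ ∈ S ∧ (∀ a ∈ S, a < δ₃ → a ≤ δ₄) := by
  intro S δ₁ δ₂ δ₃ δ₄
  have hS : ∀ b : ℕ, b < n → (∀ j : ℕ, b ≤ (b * q ^ j) % n) → b ∈ S :=
    fun b hb1 hb2 => ⟨hb1, hb2⟩
  have hS' : ∀ b, b ∈ S → b < n ∧ ∀ j : ℕ, b ≤ (b * q ^ j) % n := fun b hb => hb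
  -- basic setup
  have hp3 : 3 ≤ p := by
    have := hp.two_le
    rcases hpodd with ⟨k, hk⟩; omega
  have hq3 : 3 ≤ q := by
    rw [hq]
    calc 3 ≤ p := hp3
      _ ≤ p ^ e := Nat.le_self_pow (by omega) p
  have hqodd : Odd q := by rw [hq]; exact hpodd.pow
  obtain ⟨w, hw⟩ := hqodd
  obtain ⟨v, rfl⟩ : ∃ v, w = v + 1 := ⟨w - 1, by omega⟩
  have hqv : q = 2 * v + 3 := by omega
  obtain ⟨V, hV⟩ : ∃ V, v * v = V := ⟨_, rfl⟩
  have hq2e : q ^ 2 = 4 * V + 12 * v + 9 := by rw [hqv, ← hV]; ring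
  have hnv : n = 4 * V + 12 * v + 10 := by rw [hn, hq2e]
  obtain ⟨m, hm⟩ : ∃ m, 2 * V + 6 * v + 5 = m := ⟨_, rfl⟩
  have hnm : n = 2 * m := by omega
  -- values of the deltas
  have hd1 : δ₁ = m := by show (q ^ 2 + 1) / 2 = m; rw [hq2e]; omega
  have hd2 : δ₂ = 2 * V + 4 * v + 2 := by
    show (q - 1) ^ 2 / 2 = 2 * V + 4 * v + 2
    have e : (q - 1) ^ 2 = 4 * V + 8 * v + 4 := by
      rw [show q - 1 = 2 * v + 2 from by omega, ← hV]; ring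
    rw [e]; omega
  have hd3 : δ₃ = 2 * V + 4 * v + 1 := by
    show (q ^ 2 - 2 * q - 1) / 2 = 2 * V + 4 * v + 1
    rw [hq2e, hqv]; omega
  have hd4 : δ₄ = 2 * V + 2 * v := by
    show (q - 3) * (q - 1) / 2 = 2 * V + 2 * v
    have e : (q - 3) * (q - 1) = 4 * V + 4 * v := by
      rw [show q - 3 = 2 * v from by omega, show q - 1 = 2 * v + 2 from by omega, ← hV]
      ring
    rw [e]; omega
  -- mod computations
  have hr1 : (m * q) % n = m := by
    have e : m * q = (v + 1) * n + m := by rw [← hm, hqv, hnv, ← hV]; ring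
    rw [e]; exact mod_helper n (v + 1) m (by omega)
  have hr2 : ((2 * V + 4 * v + 2) * q) % n = m + 1 := by
    have e : (2 * V + 4 * v + 2) * q = v * n + (m + 1) := by
      rw [hqv, hnv, ← hm, ← hV]; ring
    rw [e]; exact mod_helper n v (m + 1) (by omega)
  have hr3 : ((2 * V + 4 * v + 1) * q) % n = 2 * V + 4 * v + 3 := by
    have e : (2 * V + 4 * v + 1) * q = v * n + (2 * V + 4 * v + 3) := by
      rw [hqv, hnv, ← hV]; ring
    rw [e]; exact mod_helper n v _ (by omega)
  refine ⟨?_, ?_, ?_, ?_, ?_, ?_, ?_, ?_⟩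
  · -- δ₁ ∈ S
    rw [hd1]
    exact hS m (by omega) (mem_lemma q n m m hn hr1 (by omega) le_rfl (by omega) (by omega))
  · -- everything ≤ δ₁
    intro a ha
    rw [hd1]
    obtain ⟨han, hall⟩ := hS' a ha
    rcases Nat.eq_zero_or_pos a with h0 | h0
    · omega
    · have h := hall 2
      rw [negsq q n a (n - a) hn (by omega) h0 (by omega)] at h
      omega
  · -- δ₂ ∈ S
    rw [hd2]
    exact hS _ (by omega)
      (mem_lemma q n _ (m + 1) hn hr2 (by omega) (by omega) (by omega) (by omega))
  · -- second largest
    intro a ha hlt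
    rw [hd1] at hlt
    rw [hd2]
    by_contra hcon
    push_neg at hcon
    obtain ⟨han, hall⟩ := hS' a ha
    obtain ⟨r, hr⟩ : ∃ r, (a * q) % n = r := ⟨_, rfl⟩
    have h1 : a ≤ r := by have := hall 1; rwa [pow_one, hr] at this
    have hrn : r < n := by rw [← hr]; exact Nat.mod_lt _ (by omega)
    have hri : 1 ≤ r := by omega
    have h3 := hall 3
    rw [cube_mod q n a r (n - r) hn hr hri (by omega)] at h3
    have h2 : a + r ≤ n := by omega
    exact no_leader q n m a (m - a) r (v + 1) hq3 hn hnm (by omega) (by omega) hr h1 h2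
      (Or.inl ⟨by omega, by omega⟩)
  · -- δ₃ ∈ S
    rw [hd3]
    exact hS _ (by omega)
      (mem_lemma q n _ (2 * V + 4 * v + 3) hn hr3 (by omega) (by omega) (by omega) (by omega))
  · -- third largest
    intro a ha hlt
    rw [hd2] at hlt
    rw [hd3]
    omega
  · -- δ₄ ∈ S
    rw [hd4]
    rcases Nat.eq_zero_or_pos v with hv0 | hv0
    · subst hv0
      have hV0 : V = 0 := by omega
      subst hV0
      exact hS 0 (by omega) (fun j => Nat.zero_le _)
    · obtain ⟨u, rfl⟩ : ∃ u, v = u + 1 := ⟨v - 1, by omega⟩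
      have hr4 : ((2 * V + 2 * (u + 1)) * q) % n = m + q + 2 := by
        have e : (2 * V + 2 * (u + 1)) * q = u * n + (m + q + 2) := by
          rw [hqv, hnv, ← hm, ← hV]; ring
        rw [e]; exact mod_helper n u _ (by omega)
      exact hS _ (by omega)
        (mem_lemma q n _ (m + q + 2) hn hr4 (by omega) (by omega) (by omega) (by omega))
  · -- fourth largest
    intro a ha hlt
    rw [hd3] at hlt
    rw [hd4]
    by_contra hcon
    push_neg at hcon
    obtain ⟨han, hall⟩ := hS' a ha
    obtain ⟨r, hr⟩ : ∃ r, (a * q) % n = r := ⟨_, rfl⟩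
    have h1 : a ≤ r := by have := hall 1; rwa [pow_one, hr] at this
    have hrn : r < n := by rw [← hr]; exact Nat.mod_lt _ (by omega)
    have hri : 1 ≤ r := by omega
    have h3 := hall 3
    rw [cube_mod q n a r (n - r) hn hr hri (by omega)] at h3
    have h2 : a + r ≤ n := by omega
    exact no_leader q n m a (m - a) r (v + 1) hq3 hn hnm (by omega) (by omega) hr h1 h2
      (Or.inr ⟨by omega, by omega⟩)
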